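/- Let $w_1,\dots,w_{n-1}$ be the zeros of $A_n^\gamma$ listed in descending order of modulus and set $w_n:=0$, and let $z_1,\dots,z_n$ be the zeros of $A_n$ in descending order of modulus. Then for every $1\le k\le n$, $\prod_{j=1}^k |w_j| \le \prod_{j=1}^k |z_j|$. -/

import Mathlib

open Polynomial Finset Matrix

lemma det_firstrow {R : Type*} [CommRing R] {m : ℕ} (M : Matrix (Fin (m+1)) (Fin (m+1)) R)
    (h : ∀ j, j ≠ 0 → M 0 j = 0) :
    M.det = M 0 0 * (M.submatrix Fin.succ Fin.succ).det := by
  rw [Matrix.det_succ_row_zero]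
  rw [Finset.sum_eq_single 0]
  · simp [Fin.succAbove_zero]
  · intro j _ hj; rw [h j hj]; ring
  · intro h; simp at h

lemma det_firstcol {R : Type*} [CommRing R] {m : ℕ} (M : Matrix (Fin (m+1)) (Fin (m+1)) R)
    (h : ∀ i, i ≠ 0 → M i 0 = 0) :
    M.det = M 0 0 * (M.submatrix Fin.succ Fin.succ).det := by
  rw [Matrix.det_succ_column_zero]
  rw [Finset.sum_eq_single 0]
  · simp [Fin.succAbove_zero]
  · intro i _ hi; rw [h i hi]; ring
  · intro h; simp at h

lemma minor00 {m : ℕ} (M : Matrix (Fin (m+1)) (Fin (m+1)) ℂ) :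
    M.adjugate 0 0 = (M.submatrix Fin.succ Fin.succ).det := by
  rw [Matrix.adjugate_apply, det_firstrow]
  · have h1 : M.updateRow 0 (Pi.single 0 1) 0 0 = 1 := by simp
    rw [h1, one_mul]
    have h2 : (M.updateRow 0 (Pi.single 0 1)).submatrix Fin.succ Fin.succ
        = M.submatrix Fin.succ Fin.succ := by
      ext i j
      simp [Matrix.updateRow_ne (Fin.succ_ne_zero i)]
    rw [h2]
  · intro j hj; simp [Pi.single_apply, hj]

lemma evalCharDet {m : ℕ} (B : Matrix (Fin m) (Fin m) ℂ) (x : ℂ) :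
    ((Matrix.charmatrix B).det).eval x = (Matrix.diagonal (fun _ => x) - B).det := by
  have : (Matrix.charmatrix B).map (Polynomial.evalRingHom x)
      = Matrix.diagonal (fun _ => x) - B := by
    ext i j
    by_cases h : i = j
    · subst h; simp [Matrix.charmatrix_apply_eq]
    · simp [Matrix.charmatrix_apply_ne _ _ _ h, Matrix.diagonal_apply_ne _ h, h]
  rw [← this]
  have h2 := RingHom.map_det (Polynomial.evalRingHom x) (Matrix.charmatrix B)
  exact h2

lemma Lbasis {m : ℕ} (u : EuclideanSpace ℂ (Fin (m+1))) (hu : ‖u‖ = 1) :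
    ∃ V : Matrix (Fin (m+1)) (Fin (m+1)) ℂ, Vᴴ * V = 1 ∧ (∀ i, V i 0 = u i) := by
  have hcard : Module.finrank ℂ (EuclideanSpace ℂ (Fin (m+1))) = Fintype.card (Fin (m+1)) := by
    simp [finrank_euclideanSpace_fin]
  have horth : Orthonormal ℂ (Set.restrict {(0 : Fin (m+1))} (fun _ => u)) := by
    rw [orthonormal_iff_ite]
    rintro ⟨i, hi⟩ ⟨j, hj⟩
    simp only [Set.mem_singleton_iff] at hi hj
    have : (⟨i, hi⟩ : ({(0 : Fin (m+1))} : Set (Fin (m+1)))) = ⟨j, hj⟩ := by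
      subst hi; subst hj; rfl
    rw [this, if_pos rfl]
    show inner ℂ u u = 1
    rw [@inner_self_eq_norm_sq_to_K ℂ]
    rw [hu]; norm_num
  obtain ⟨b, hb⟩ := horth.exists_orthonormalBasis_extension_of_card_eq hcard
  refine ⟨Matrix.of (fun i j => b j i), ?_, ?_⟩
  · ext a c
    have : (∀ i j, (inner ℂ (b i) (b j) : ℂ) = if i = j then 1 else 0) :=
      orthonormal_iff_ite.mp b.orthonormal
    have h2 := this a c
    rw [PiLp.inner_apply] at h2
    simp only [Matrix.mul_apply, Matrix.conjTranspose_apply, Matrix.of_apply, Matrix.one_apply]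
    rw [← h2]
    exact Finset.sum_congr rfl fun j _ => (RCLike.inner_apply' _ _).symm
  · intro i
    have : b 0 = u := hb 0 rfl
    simp [this]

lemma flag : ∀ (k m : ℕ), k ≤ m → ∀ (B : Matrix (Fin m) (Fin m) ℂ) (w : ℕ → ℂ),
    (Matrix.charmatrix B).det = ∏ j ∈ Finset.range m, (X - Polynomial.C (w j)) →
    ∃ P : Matrix (Fin m) (Fin k) ℂ, Pᴴ * P = 1 ∧ (Pᴴ * B * P).det = ∏ j ∈ Finset.range k, w j := by
  intro k
  induction k with
  | zero =>
    intro m _ B w _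
    refine ⟨0, Subsingleton.elim _ _, ?_⟩
    simp [Matrix.det_fin_zero]
  | succ k IH =>
    intro m hk B w hB
    obtain ⟨m', rfl⟩ : ∃ m', m = m' + 1 := ⟨m - 1, by omega⟩
    -- w 0 is an eigenvalue
    have hev : (Matrix.diagonal (fun _ => w 0) - B).det = 0 := by
      have h1 := congrArg (Polynomial.eval (w 0)) hB
      rw [evalCharDet] at h1
      rw [h1, Polynomial.eval_prod]
      apply Finset.prod_eq_zero (Finset.mem_range.mpr (Nat.succ_pos m'))
      simp
    obtain ⟨v, hv0, hv⟩ := (Matrix.exists_mulVec_eq_zero_iff).mpr hev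
    have hvec : B.mulVec v = w 0 • v := by
      rw [Matrix.sub_mulVec] at hv
      have h2 : (Matrix.diagonal (fun _ => w 0)).mulVec v = w 0 • v := by
        ext i; simp [Matrix.mulVec_diagonal]
      rw [h2] at hv
      exact (sub_eq_zero.mp hv).symm
    -- normalized eigenvector
    set E := EuclideanSpace ℂ (Fin (m' + 1)) with hE
    let v' : E := WithLp.toLp 2 v
    have hv'0 : v' ≠ 0 := by
      intro h
      exact hv0 (by simpa [v'] using congrArg WithLp.ofLp h)
    let c : ℂ := (‖v'‖ : ℂ)⁻¹
    let u : E := c • v'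
    have hc0 : (‖v'‖ : ℂ) ≠ 0 := by
      simp [norm_ne_zero_iff.mpr hv'0]
    have hu : ‖u‖ = 1 := by
      have : ‖u‖ = ‖c‖ * ‖v'‖ := norm_smul c v'
      rw [this]
      simp only [c, norm_inv, Complex.norm_real, Real.norm_eq_abs, abs_norm]
      rw [abs_of_nonneg (norm_nonneg _), inv_mul_cancel₀ (norm_ne_zero_iff.mpr hv'0)]
    have huvec : B.mulVec u = w 0 • u := by
      have : B.mulVec (c • v) = c • B.mulVec v := by
        rw [Matrix.mulVec_smul]
      show B.mulVec (c • v) = w 0 • (c • v)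
      rw [this, hvec, smul_comm]
    obtain ⟨V, hV1, hVcol⟩ := Lbasis u hu
    have hV2 : V * Vᴴ = 1 := mul_eq_one_comm.mp hV1
    obtain ⟨Cm, hCm⟩ : ∃ Cm, Cm = Vᴴ * B * V := ⟨_, rfl⟩
    -- first column of Cm
    have hcol : ∀ i, Cm i 0 = if i = 0 then w 0 else 0 := by
      intro i
      have h3 : Cm i 0 = ∑ l, star (V l i) * (B * V) l 0 := by
        rw [hCm, Matrix.mul_assoc, Matrix.mul_apply]
        simp [Matrix.conjTranspose_apply]
      have h4 : ∀ l, (B * V) l 0 = w 0 * u l := by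
        intro l
        have : (B * V) l 0 = B.mulVec u l := by
          rw [Matrix.mul_apply, Matrix.mulVec, dotProduct]
          congr 1; ext p; rw [hVcol p]
        rw [this, huvec]; rfl
      have h5 : Cm i 0 = w 0 * ∑ l, star (V l i) * V l 0 := by
        rw [h3, Finset.mul_sum]
        congr 1; ext l; rw [h4 l, hVcol l]; ring
      have h6 : ∑ l, star (V l i) * V l 0 = (Vᴴ * V) i 0 := by
        rw [Matrix.mul_apply]; simp [Matrix.conjTranspose_apply]
      rw [h5, h6, hV1]
      by_cases h : i = 0
      · subst h; simp [Matrix.one_apply]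
      · simp [Matrix.one_apply, h]
    -- charmatrix of Cm has same det
    have hmapmul : ∀ (A D : Matrix (Fin (m'+1)) (Fin (m'+1)) ℂ),
        (A * D).map (Polynomial.C : ℂ →+* ℂ[X]) = A.map Polynomial.C * D.map Polynomial.C :=
      fun A D => Matrix.map_mul
    have hmap1 : (Vᴴ.map (Polynomial.C : ℂ →+* ℂ[X])) * (V.map Polynomial.C) = 1 := by
      rw [← hmapmul, hV1, Matrix.map_one _ (map_zero _) (map_one _)]
    have hconj : Matrix.charmatrix Cm
        = (Vᴴ.map Polynomial.C) * (Matrix.charmatrix B) * (V.map Polynomial.C) := by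
      unfold Matrix.charmatrix
      rw [Matrix.mul_sub, Matrix.sub_mul]
      congr 1
      · have h8 : Vᴴ.map Polynomial.C * Matrix.scalar (Fin (m'+1)) X * V.map Polynomial.C
            = Matrix.scalar (Fin (m'+1)) (X : ℂ[X]) := by
          rw [← (Matrix.scalar_commute (X : ℂ[X]) (Commute.all _) (Vᴴ.map Polynomial.C)).eq,
            Matrix.mul_assoc, hmap1, Matrix.mul_one]
        exact h8.symm
      · simp only [RingHom.mapMatrix_apply]
        rw [← hmapmul, ← hmapmul, hCm]
    have hCchar : (Matrix.charmatrix Cm).det = ∏ j ∈ Finset.range (m' + 1), (X - Polynomial.C (w j)) := by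
      rw [hconj, Matrix.det_mul, Matrix.det_mul, ← hB]
      have : (Vᴴ.map (Polynomial.C : ℂ →+* ℂ[X])).det * (V.map Polynomial.C).det = 1 := by
        rw [← Matrix.det_mul, hmap1, Matrix.det_one]
      ring_nf
      calc (Vᴴ.map Polynomial.C).det * (Matrix.charmatrix B).det * (V.map Polynomial.C).det
          = (Matrix.charmatrix B).det * ((Vᴴ.map Polynomial.C).det * (V.map Polynomial.C).det) := by ring
        _ = (Matrix.charmatrix B).det := by rw [this, mul_one]
    -- factor out (X - C (w 0))
    obtain ⟨B', hB'def⟩ : ∃ B', B' = Cm.submatrix Fin.succ Fin.succ := ⟨_, rfl⟩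
    have hsub : (Matrix.charmatrix Cm).submatrix Fin.succ Fin.succ = Matrix.charmatrix B' := by
      ext i j
      by_cases h : i = j
      · subst h
        simp [Matrix.charmatrix_apply_eq, hB'def]
      · have h' : Fin.succ i ≠ Fin.succ j := fun hc => h (Fin.succ_inj.mp hc)
        simp [Matrix.charmatrix_apply_ne _ _ _ h, Matrix.charmatrix_apply_ne _ _ _ h', hB'def]
    have hfac : (Matrix.charmatrix Cm).det = (X - Polynomial.C (w 0)) * (Matrix.charmatrix B').det := by
      rw [det_firstcol]
      · rw [hsub, Matrix.charmatrix_apply_eq, hcol 0, if_pos rfl]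
      · intro i hi
        rw [Matrix.charmatrix_apply_ne _ _ _ hi, hcol i, if_neg hi]
        simp
    have hB'char : (Matrix.charmatrix B').det = ∏ j ∈ Finset.range m', (X - Polynomial.C (w (j+1))) := by
      have h7 : (X - Polynomial.C (w 0)) * (Matrix.charmatrix B').det
          = (X - Polynomial.C (w 0)) * ∏ j ∈ Finset.range m', (X - Polynomial.C (w (j+1))) := by
        rw [← hfac, hCchar, Finset.prod_range_succ']
        ring
      exact mul_left_cancel₀ (Polynomial.X_sub_C_ne_zero (w 0)) h7
    obtain ⟨P', hP'1, hP'2⟩ := IH m' (by omega) B' (fun j => w (j+1)) hB'char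
    -- assemble
    let P₀ : Matrix (Fin (m'+1)) (Fin (k+1)) ℂ := Matrix.of fun i j =>
      Fin.cases (if i = 0 then 1 else 0) (fun j' => Fin.cases 0 (fun i' => P' i' j') i) j
    have hP00 : ∀ i, P₀ i 0 = if i = 0 then 1 else 0 := fun i => rfl
    have hP0s0 : ∀ j', P₀ 0 (Fin.succ j') = 0 := by intro j'; simp [P₀]
    have hPss : ∀ i' j', P₀ (Fin.succ i') (Fin.succ j') = P' i' j' := by intro i' j'; simp [P₀]
    have hP'ap : ∀ a' b', (∑ i', star (P' i' a') * P' i' b') = (1 : Matrix (Fin k) (Fin k) ℂ) a' b' := by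
      intro a' b'
      rw [← hP'1, Matrix.mul_apply]
      simp [Matrix.conjTranspose_apply]
    have hP₀1 : P₀ᴴ * P₀ = 1 := by
      ext a b
      rw [Matrix.mul_apply]
      simp only [Matrix.conjTranspose_apply]
      rcases Fin.eq_zero_or_eq_succ a with rfl | ⟨a', rfl⟩ <;>
        rcases Fin.eq_zero_or_eq_succ b with rfl | ⟨b', rfl⟩
      · simp [Fin.sum_univ_succ, hP00, Fin.succ_ne_zero, Matrix.one_apply]
      · simp [Fin.sum_univ_succ, hP00, hP0s0, hPss, Fin.succ_ne_zero, Matrix.one_apply,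
          (Fin.succ_ne_zero b').symm]
      · simp [Fin.sum_univ_succ, hP00, hP0s0, hPss, Fin.succ_ne_zero, Matrix.one_apply]
      · rw [Fin.sum_univ_succ]
        rw [hP0s0, hP0s0]
        simp only [hPss, star_zero, zero_mul, zero_add]
        rw [hP'ap a' b']
        simp [Matrix.one_apply, Fin.succ_inj]
    have hCP0 : ∀ i, (Cm * P₀) i 0 = Cm i 0 := by
      intro i
      rw [Matrix.mul_apply, Finset.sum_eq_single 0]
      · rw [hP00 0, if_pos rfl, mul_one]
      · intro l _ hl; rw [hP00 l, if_neg hl, mul_zero]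
      · intro h; simp at h
    have hCPs : ∀ i b', (Cm * P₀) i (Fin.succ b') = ∑ l', Cm i (Fin.succ l') * P' l' b' := by
      intro i b'
      rw [Matrix.mul_apply, Fin.sum_univ_succ, hP0s0, mul_zero, zero_add]
      exact Finset.sum_congr rfl fun l' _ => by rw [hPss]
    obtain ⟨M, hMdef⟩ : ∃ M, M = P₀ᴴ * Cm * P₀ := ⟨_, rfl⟩
    have hMap : ∀ a b, M a b = ∑ i, star (P₀ i a) * (Cm * P₀) i b := by
      intro a b
      rw [hMdef, Matrix.mul_assoc, Matrix.mul_apply]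
      simp [Matrix.conjTranspose_apply]
    have hMcol : ∀ a, a ≠ 0 → M a 0 = 0 := by
      intro a ha
      rw [hMap]
      rw [Finset.sum_eq_single 0]
      · rw [hCP0, hcol 0, if_pos rfl]
        rcases Fin.eq_zero_or_eq_succ a with rfl | ⟨a', rfl⟩
        · exact absurd rfl ha
        · rw [hP0s0]; simp
      · intro l _ hl; rw [hCP0, hcol l, if_neg hl, mul_zero]
      · intro h; simp at h
    have hM00 : M 0 0 = w 0 := by
      rw [hMap, Finset.sum_eq_single 0]
      · rw [hCP0, hcol 0, if_pos rfl, hP00, if_pos rfl]; simp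
      · intro l _ hl; rw [hCP0, hcol l, if_neg hl, mul_zero]
      · intro h; simp at h
    have hRHS : ∀ a b, (P'ᴴ * B' * P') a b
        = ∑ i', star (P' i' a) * ∑ l', Cm (Fin.succ i') (Fin.succ l') * P' l' b := by
      intro a b
      rw [Matrix.mul_assoc, Matrix.mul_apply]
      refine Finset.sum_congr rfl fun i' _ => ?_
      rw [Matrix.conjTranspose_apply]
      congr 1
      rw [Matrix.mul_apply]
      refine Finset.sum_congr rfl fun l' _ => ?_
      rw [hB'def, Matrix.submatrix_apply]
    have hMsub : M.submatrix Fin.succ Fin.succ = P'ᴴ * B' * P' := by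
      ext a b
      rw [Matrix.submatrix_apply, hMap, Fin.sum_univ_succ, hP0s0, star_zero, zero_mul, zero_add,
        hRHS]
      refine Finset.sum_congr rfl fun i' _ => ?_
      rw [hPss, hCPs]
    have hdetM : M.det = w 0 * (P'ᴴ * B' * P').det := by
      rw [det_firstcol M hMcol, hM00, hMsub]
    refine ⟨V * P₀, ?_, ?_⟩
    · rw [Matrix.conjTranspose_mul, Matrix.mul_assoc, ← Matrix.mul_assoc Vᴴ, hV1,
        Matrix.one_mul, hP₀1]
    · have : (V * P₀)ᴴ * B * (V * P₀) = M := by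
        rw [hMdef, hCm, Matrix.conjTranspose_mul]
        rw [Matrix.mul_assoc, Matrix.mul_assoc, Matrix.mul_assoc, Matrix.mul_assoc,
          Matrix.mul_assoc]
      rw [this, hdetM, hP'2, Finset.prod_range_succ']
      ring

lemma idA {n k : ℕ} (z : Fin n → ℂ) (W R : Matrix (Fin n) (Fin k) ℂ) :
    (Wᴴ * (Matrix.diagonal z * R)).det
      = ∑ f : Fin k → Fin n, (∏ a, (z (f a) * R (f a) a)) * star ((W.submatrix f id).det) := by
  rw [Matrix.det_apply']
  have hent : ∀ (σ : Equiv.Perm (Fin k)) (a : Fin k),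
      (Wᴴ * (Matrix.diagonal z * R)) (σ a) a = ∑ i, star (W i (σ a)) * (z i * R i a) := by
    intro σ a
    rw [Matrix.mul_apply]
    refine Finset.sum_congr rfl fun i _ => ?_
    rw [Matrix.conjTranspose_apply, Matrix.diagonal_mul]
  calc ∑ σ : Equiv.Perm (Fin k), ((Equiv.Perm.sign σ : ℤ) : ℂ)
          * ∏ a, (Wᴴ * (Matrix.diagonal z * R)) (σ a) a
      = ∑ σ : Equiv.Perm (Fin k), ∑ f : Fin k → Fin n, ((Equiv.Perm.sign σ : ℤ) : ℂ)
          * ∏ a, star (W (f a) (σ a)) * (z (f a) * R (f a) a) := by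
        refine Finset.sum_congr rfl fun σ _ => ?_
        rw [← Finset.mul_sum]
        congr 1
        calc ∏ a, (Wᴴ * (Matrix.diagonal z * R)) (σ a) a
            = ∏ a, ∑ i, star (W i (σ a)) * (z i * R i a) :=
              Finset.prod_congr rfl fun a _ => hent σ a
          _ = ∑ f ∈ Fintype.piFinset (fun _ : Fin k => (Finset.univ : Finset (Fin n))),
                ∏ a, star (W (f a) (σ a)) * (z (f a) * R (f a) a) :=
              Finset.prod_univ_sum _ _
          _ = ∑ f : Fin k → Fin n, ∏ a, star (W (f a) (σ a)) * (z (f a) * R (f a) a) := by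
              rw [Fintype.piFinset_univ]
    _ = ∑ f : Fin k → Fin n, ∑ σ : Equiv.Perm (Fin k), ((Equiv.Perm.sign σ : ℤ) : ℂ)
          * ∏ a, star (W (f a) (σ a)) * (z (f a) * R (f a) a) := Finset.sum_comm
    _ = ∑ f : Fin k → Fin n, (∏ a, (z (f a) * R (f a) a)) * star ((W.submatrix f id).det) := by
        refine Finset.sum_congr rfl fun f _ => ?_
        rw [← Matrix.det_conjTranspose, Matrix.det_apply', Finset.mul_sum]
        refine Finset.sum_congr rfl fun σ _ => ?_
        have : ∏ a, ((W.submatrix f id)ᴴ) (σ a) a = ∏ a, star (W (f a) (σ a)) :=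
          Finset.prod_congr rfl fun a _ => rfl
        rw [this, Finset.prod_mul_distrib]
        ring

lemma group_sum {n k : ℕ} (F : (Fin k → Fin n) → ℂ)
    (h0 : ∀ f, ¬ Function.Injective f → F f = 0) :
    ∑ f : Fin k → Fin n, F f
      = ∑ p ∈ (Finset.powersetCard k (Finset.univ : Finset (Fin n))).attach,
          ∑ σ : Equiv.Perm (Fin k),
            F ((p.1.orderEmbOfFin (Finset.mem_powersetCard.mp p.2).2) ∘ σ) := by
  classical
  have hfil : ∑ f : Fin k → Fin n, F f
      = ∑ f ∈ Finset.univ.filter (fun f : Fin k → Fin n => Function.Injective f), F f :=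
    (Finset.sum_filter_of_ne (fun f _ hF => by
      by_contra h
      exact hF (h0 f h))).symm
  rw [hfil, ← Finset.sum_product']
  symm
  refine Finset.sum_bij (fun q _ => (q.1.1.orderEmbOfFin (Finset.mem_powersetCard.mp q.1.2).2) ∘ q.2)
    ?_ ?_ ?_ ?_
  · rintro ⟨p, σ⟩ -
    rw [Finset.mem_filter]
    exact ⟨Finset.mem_univ _,
      (p.1.orderEmbOfFin (Finset.mem_powersetCard.mp p.2).2).injective.comp σ.injective⟩
  · intro q₁ hq₁ q₂ hq₂ hq
    obtain ⟨p₁, σ₁⟩ := q₁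
    obtain ⟨p₂, σ₂⟩ := q₂
    simp only at hq
    have hrange : ∀ (p : {x // x ∈ Finset.powersetCard k (Finset.univ : Finset (Fin n))})
        (σ : Equiv.Perm (Fin k)),
        Set.range ((p.1.orderEmbOfFin (Finset.mem_powersetCard.mp p.2).2) ∘ σ) = ↑p.1 := by
      intro p σ
      rw [Set.range_comp]
      rw [σ.surjective.range_eq, Set.image_univ]
      exact Finset.range_orderEmbOfFin _ _
    have h1 : ↑p₁.1 = (↑p₂.1 : Set (Fin n)) := by
      rw [← hrange p₁ σ₁, ← hrange p₂ σ₂, hq]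
    have hp : p₁ = p₂ := Subtype.ext (Finset.coe_injective h1)
    subst hp
    have hσ : σ₁ = σ₂ := by
      ext a
      have h5 : σ₁ a = σ₂ a :=
        (p₁.1.orderEmbOfFin (Finset.mem_powersetCard.mp p₁.2).2).injective (congrFun hq a)
      rw [h5]
    rw [hσ]
  · intro f hf
    rw [Finset.mem_filter] at hf
    have hinj := hf.2
    set s : Finset (Fin n) := Finset.univ.image f with hs
    have hcard : s.card = k := by
      rw [hs, Finset.card_image_of_injective _ hinj, Finset.card_univ, Fintype.card_fin]
    have hmem : s ∈ Finset.powersetCard k (Finset.univ : Finset (Fin n)) :=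
      Finset.mem_powersetCard.mpr ⟨Finset.subset_univ s, hcard⟩
    have hfmem : ∀ a, f a ∈ s := fun a => Finset.mem_image_of_mem f (Finset.mem_univ a)
    let g : Fin k → Fin k := fun a => (s.orderIsoOfFin hcard).symm ⟨f a, hfmem a⟩
    have hg : Function.Injective g := by
      intro a b hab
      apply hinj
      have h2 : (⟨f a, hfmem a⟩ : {x // x ∈ s}) = ⟨f b, hfmem b⟩ := by
        have h3 := congrArg (s.orderIsoOfFin hcard) hab
        simpa only [g, OrderIso.apply_symm_apply] using h3
      exact congrArg Subtype.val h2
    have hgb : Function.Bijective g := Finite.injective_iff_bijective.mp hg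
    refine ⟨(⟨⟨s, hmem⟩, Equiv.ofBijective g hgb⟩ :
      {x // x ∈ Finset.powersetCard k (Finset.univ : Finset (Fin n))} × Equiv.Perm (Fin k)),
      Finset.mem_product.mpr ⟨Finset.mem_attach _ _, Finset.mem_univ _⟩, ?_⟩
    funext a
    show s.orderEmbOfFin (Finset.mem_powersetCard.mp hmem).2 (g a) = f a
    rw [← Finset.coe_orderIsoOfFin_apply]
    show ((s.orderIsoOfFin hcard) ((s.orderIsoOfFin hcard).symm ⟨f a, hfmem a⟩) : Fin n) = f a
    rw [OrderIso.apply_symm_apply]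
  · rintro ⟨p, σ⟩ -
    rfl

lemma prod_emb {M : Type*} [CommMonoid M] {n k : ℕ} (s : Finset (Fin n)) (h : s.card = k) (g : Fin n → M) :
    ∏ a : Fin k, g (s.orderEmbOfFin h a) = ∏ i ∈ s, g i := by
  refine Finset.prod_bij (fun a _ => s.orderEmbOfFin h a)
    (fun a _ => Finset.orderEmbOfFin_mem s h a)
    (fun a _ b _ hab => (s.orderEmbOfFin h).injective hab) ?_ (fun a _ => rfl)
  intro b hb
  have : b ∈ Set.range (s.orderEmbOfFin h) := by
    rw [Finset.range_orderEmbOfFin]; exact hb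
  obtain ⟨a, ha⟩ := this
  exact ⟨a, Finset.mem_univ a, ha⟩

lemma key_det {n k : ℕ} (z : Fin n → ℂ) (R : Matrix (Fin n) (Fin k) ℂ) :
    (Rᴴ * (Matrix.diagonal z * R)).det
      = ∑ p ∈ (Finset.powersetCard k (Finset.univ : Finset (Fin n))).attach,
          (∏ i ∈ p.1, z i) *
            ((Complex.normSq ((R.submatrix (p.1.orderEmbOfFin
              (Finset.mem_powersetCard.mp p.2).2) id).det) : ℂ)) := by
  rw [idA]
  rw [group_sum (fun f => (∏ a, (z (f a) * R (f a) a)) * star ((R.submatrix f id).det))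
    (fun f hf => ?_)]
  · refine Finset.sum_congr rfl fun p _ => ?_
    have hcard := (Finset.mem_powersetCard.mp p.2).2
    set e := p.1.orderEmbOfFin hcard with he
    set dR := (R.submatrix (⇑e) id).det with hdR
    calc ∑ σ : Equiv.Perm (Fin k), (∏ a, (z ((e ∘ σ) a) * R ((e ∘ σ) a) a))
            * star ((R.submatrix (⇑e ∘ ⇑σ) id).det)
        = ∑ σ : Equiv.Perm (Fin k), (∏ i ∈ p.1, z i) * star dR
            * (((Equiv.Perm.sign σ : ℤ) : ℂ) * ∏ a, R (e (σ a)) a) := by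
          refine Finset.sum_congr rfl fun σ _ => ?_
          have h1 : ∏ a, (z ((e ∘ σ) a) * R ((e ∘ σ) a) a)
              = (∏ a, z (e (σ a))) * ∏ a, R (e (σ a)) a := by
            rw [← Finset.prod_mul_distrib]; rfl
          have h2 : ∏ a, z (e (σ a)) = ∏ i ∈ p.1, z i := by
            rw [Equiv.prod_comp σ (fun a => z (e a)), prod_emb]
          have h3 : (R.submatrix (⇑e ∘ ⇑σ) id) = (R.submatrix (⇑e) id).submatrix (⇑σ) id := by
            rw [Matrix.submatrix_submatrix]; rfl
          have h4 : star ((R.submatrix (⇑e ∘ ⇑σ) id).det)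
              = ((Equiv.Perm.sign σ : ℤ) : ℂ) * star dR := by
            rw [h3, Matrix.det_permute, star_mul', star_intCast, hdR]
          rw [h1, h2, h4]
          ring
      _ = (∏ i ∈ p.1, z i) * (Complex.normSq dR : ℂ) := by
          rw [← Finset.mul_sum]
          have h5 : ∑ σ : Equiv.Perm (Fin k), ((Equiv.Perm.sign σ : ℤ) : ℂ)
              * ∏ a, R (e (σ a)) a = dR := by
            rw [hdR, Matrix.det_apply']
            exact Finset.sum_congr rfl fun σ _ =>
              congrArg _ (Finset.prod_congr rfl fun a _ => rfl)
          rw [h5]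
          have h6 : star dR * dR = (Complex.normSq dR : ℂ) := by
            rw [Complex.star_def, mul_comm, Complex.mul_conj]
          rw [mul_assoc, h6]
  · obtain ⟨a, b, hab, hne⟩ := Function.not_injective_iff.mp hf
    have : (R.submatrix f id).det = 0 := by
      apply Matrix.det_zero_of_row_eq hne
      funext j
      simp [Matrix.submatrix_apply, hab]
    show (∏ a : Fin k, z (f a) * R (f a) a) * star (R.submatrix f id).det = 0
    rw [this, star_zero, mul_zero]

lemma L2 {n k : ℕ} (z : Fin n → ℂ) (R : Matrix (Fin n) (Fin k) ℂ) (hR : Rᴴ * R = 1)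
    (Mb : ℝ) (hmax : ∀ s : Finset (Fin n), s.card = k → ∏ i ∈ s, ‖z i‖ ≤ Mb) :
    ‖(Rᴴ * (Matrix.diagonal z * R)).det‖ ≤ Mb := by
  classical
  have h1 := key_det (fun _ => (1 : ℂ)) R
  rw [Matrix.diagonal_one, Matrix.one_mul, hR, Matrix.det_one] at h1
  simp only [Finset.prod_const_one, one_mul] at h1
  have hreal : ∑ p ∈ (Finset.powersetCard k (Finset.univ : Finset (Fin n))).attach,
      Complex.normSq ((R.submatrix (p.1.orderEmbOfFin
        (Finset.mem_powersetCard.mp p.2).2) id).det) = 1 := by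
    have h2 := h1.symm
    exact_mod_cast h2
  rw [key_det z R]
  refine le_trans (norm_sum_le _ _) ?_
  have hstep : ∀ p ∈ (Finset.powersetCard k (Finset.univ : Finset (Fin n))).attach,
      ‖((∏ i ∈ p.1, z i) * ((Complex.normSq ((R.submatrix (p.1.orderEmbOfFin
          (Finset.mem_powersetCard.mp p.2).2) id).det) : ℂ)))‖
        ≤ Mb * Complex.normSq ((R.submatrix (p.1.orderEmbOfFin
          (Finset.mem_powersetCard.mp p.2).2) id).det) := by
    intro p _
    rw [norm_mul]
    have ha : ‖((Complex.normSq ((R.submatrix (p.1.orderEmbOfFin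
        (Finset.mem_powersetCard.mp p.2).2) id).det) : ℂ))‖
        = Complex.normSq ((R.submatrix (p.1.orderEmbOfFin
        (Finset.mem_powersetCard.mp p.2).2) id).det) := by
      rw [Complex.norm_of_nonneg (Complex.normSq_nonneg _)]
    rw [ha]
    apply mul_le_mul_of_nonneg_right _ (Complex.normSq_nonneg _)
    have hb : ‖∏ i ∈ (p.1 : Finset (Fin n)), z i‖
        = ∏ i ∈ (p.1 : Finset (Fin n)), ‖z i‖ := norm_prod _ _
    rw [hb]
    exact hmax p.1 (Finset.mem_powersetCard.mp p.2).2
  refine le_trans (Finset.sum_le_sum hstep) ?_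
  rw [← Finset.mul_sum, hreal, mul_one]

lemma fin_le_strictMono {k : ℕ} (f : Fin k → ℕ) (hf : StrictMono f) : ∀ a : Fin k, (a : ℕ) ≤ f a := by
  have key : ∀ v : ℕ, ∀ a : Fin k, a.val = v → v ≤ f a := by
    intro v
    induction v with
    | zero => intro a _; exact Nat.zero_le _
    | succ t ih =>
      intro a ha
      have hlt : t < k := by omega
      have h1 := ih ⟨t, hlt⟩ rfl
      have h2 : (⟨t, hlt⟩ : Fin k) < a := by rw [Fin.lt_def]; simp; omega
      have h3 := hf h2
      omega
  exact fun a => key a.val a rfl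

lemma subset_prod {n k : ℕ} (g : ℕ → ℝ) (h0 : ∀ i, 0 ≤ g i)
    (hdesc : ∀ i j, i ≤ j → j < n → g j ≤ g i) (s : Finset (Fin n)) (hs : s.card = k) :
    ∏ i ∈ s, g i.val ≤ ∏ j ∈ Finset.range k, g j := by
  have h1 : ∏ a : Fin k, g ((s.orderEmbOfFin hs) a).val = ∏ i ∈ s, g i.val :=
    prod_emb s hs (fun i => g i.val)
  rw [← h1, ← Fin.prod_univ_eq_prod_range (fun j => g j) k]
  have hsm : StrictMono (fun a : Fin k => ((s.orderEmbOfFin hs) a).val) := by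
    intro a b hab
    exact (s.orderEmbOfFin hs).strictMono hab
  refine Finset.prod_le_prod (fun a _ => h0 _) (fun a _ => ?_)
  exact hdesc a.val ((s.orderEmbOfFin hs) a).val (fin_le_strictMono _ hsm a)
    ((s.orderEmbOfFin hs) a).isLt

theorem majorization_zeros_incomplete_combination
    (n : ℕ) (hn : 1 ≤ n) (z w : ℕ → ℂ) (γ : ℕ → ℝ)
    (hγ0 : ∀ k ∈ Finset.range n, 0 ≤ γ k)
    (hγ1 : ∑ k ∈ Finset.range n, γ k = 1)
    -- z lists the zeros of Aₙ in descending order of modulus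
    (hzdesc : ∀ i j, i ≤ j → j < n → ‖z j‖ ≤ ‖z i‖)
    -- w lists the zeros of Aₙ^γ (a monic polynomial of degree n-1)
    -- in descending order of modulus, and wₙ := 0
    (hwdesc : ∀ i j, i ≤ j → j < n → ‖w j‖ ≤ ‖w i‖)
    (hwn : w (n - 1) = 0)
    (hroots : (∑ k ∈ Finset.range n, C ((γ k : ℂ)) *
        ∏ j ∈ (Finset.range n).erase k, (X - C (z j)))
        = ∏ j ∈ Finset.range (n - 1), (X - C (w j))) :
    ∀ k, 1 ≤ k → k ≤ n →
      ∏ j ∈ Finset.range k, ‖w j‖ ≤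
        ∏ j ∈ Finset.range k, ‖z j‖ := by
  intro k _ hkn
  obtain ⟨m, rfl⟩ : ∃ m, n = m + 1 := ⟨n - 1, by omega⟩
  have hm1 : m + 1 - 1 = m := by omega
  rw [hm1] at hwn hroots
  by_cases hkm : k = m + 1
  · -- the last product contains |w m| = 0
    subst hkm
    have hz : ∏ j ∈ Finset.range (m+1), ‖w j‖ = 0 :=
      Finset.prod_eq_zero (Finset.self_mem_range_succ m) (by rw [hwn]; simp)
    rw [hz]
    exact Finset.prod_nonneg fun j _ => norm_nonneg _
  have hkm' : k ≤ m := by omega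
  -- the weight vector
  have hg : ∀ i : Fin (m+1), (0:ℝ) ≤ γ i.val := fun i => hγ0 i.val (Finset.mem_range.mpr i.isLt)
  set u : EuclideanSpace ℂ (Fin (m+1)) := WithLp.toLp 2 (fun i : Fin (m+1) => ((Real.sqrt (γ i.val) : ℝ) : ℂ)) with hu_def
  have hu : ‖u‖ = 1 := by
    rw [EuclideanSpace.norm_eq]
    have h1 : ∀ i : Fin (m+1), ‖u i‖^2 = γ i.val := by
      intro i
      rw [hu_def]
      simp only [Complex.norm_real, Real.norm_eq_abs, sq_abs]
      exact Real.sq_sqrt (hg i)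
    have h2 : ∑ i : Fin (m+1), ‖u i‖^2 = 1 := by
      rw [Finset.sum_congr rfl fun i _ => h1 i]
      rw [Fin.sum_univ_eq_sum_range (fun j => γ j) (m+1), hγ1]
    rw [h2, Real.sqrt_one]
  obtain ⟨V, hV1, hVcol⟩ := Lbasis u hu
  have hV2 : V * Vᴴ = 1 := mul_eq_one_comm.mp hV1
  obtain ⟨Z, hZ⟩ : ∃ Z, Z = Matrix.diagonal (fun i : Fin (m+1) => z i.val) := ⟨_, rfl⟩
  obtain ⟨Cm, hCm⟩ : ∃ Cm, Cm = Vᴴ * Z * V := ⟨_, rfl⟩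
  obtain ⟨B, hB⟩ : ∃ B, B = Cm.submatrix Fin.succ Fin.succ := ⟨_, rfl⟩
  -- pointwise determinant identity
  have hpoint : ∀ x : ℂ, (∀ i : Fin (m+1), x ≠ z i.val) →
      (Matrix.diagonal (fun _ : Fin m => x) - B).det
        = ∑ j ∈ Finset.range (m+1), (γ j : ℂ) * ∏ l ∈ (Finset.range (m+1)).erase j, (x - z l) := by
    intro x hx
    obtain ⟨N, hN⟩ : ∃ N, N = Matrix.diagonal (fun i : Fin (m+1) => x - z i.val) := ⟨_, rfl⟩
    have hNdet : N.det = ∏ i : Fin (m+1), (x - z i.val) := by rw [hN, Matrix.det_diagonal]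
    have hNe : ∀ i : Fin (m+1), x - z i.val ≠ 0 := fun i => sub_ne_zero.mpr (hx i)
    obtain ⟨Ni, hNi⟩ : ∃ Ni, Ni = Matrix.diagonal (fun i : Fin (m+1) => (x - z i.val)⁻¹) :=
      ⟨_, rfl⟩
    have hNNi : N * Ni = 1 := by
      rw [hN, hNi, Matrix.diagonal_mul_diagonal]
      have he : (fun i : Fin (m+1) => (x - z i.val) * (x - z i.val)⁻¹)
          = fun _ => (1:ℂ) := by
        funext i; exact mul_inv_cancel₀ (hNe i)
      rw [he, Matrix.diagonal_one]
    obtain ⟨M', hM'⟩ : ∃ M', M' = Vᴴ * N * V := ⟨_, rfl⟩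
    have hdiagsplit : Matrix.diagonal (fun i : Fin (m+1) => x - z i.val)
        = Matrix.diagonal (fun _ : Fin (m+1) => x) - Z := by
      ext i j
      by_cases h : i = j
      · subst h; simp [hZ]
      · simp [Matrix.diagonal_apply_ne _ h, hZ]
    have hxpart : Vᴴ * Matrix.diagonal (fun _ : Fin (m+1) => x) * V
        = Matrix.diagonal (fun _ : Fin (m+1) => x) := by
      rw [← Matrix.smul_one_eq_diagonal x, Matrix.mul_smul, Matrix.mul_one, Matrix.smul_mul, hV1]
    have hM'eq : Matrix.diagonal (fun _ : Fin (m+1) => x) - Cm = M' := by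
      rw [hM', hN, hdiagsplit, Matrix.mul_sub, Matrix.sub_mul, hxpart, hCm]
    have hdV : (Vᴴ).det * V.det = 1 := by rw [← Matrix.det_mul, hV1, Matrix.det_one]
    have hdetM' : M'.det = N.det := by
      rw [hM', Matrix.det_mul, Matrix.det_mul]
      calc (Vᴴ).det * N.det * V.det = N.det * ((Vᴴ).det * V.det) := by ring
        _ = N.det := by rw [hdV, mul_one]
    have hM'W : M' * (Vᴴ * Ni * V) = 1 := by
      rw [hM']
      calc (Vᴴ * N * V) * (Vᴴ * Ni * V) = Vᴴ * (N * ((V * Vᴴ) * (Ni * V))) := by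
            simp only [Matrix.mul_assoc]
        _ = Vᴴ * ((N * Ni) * V) := by rw [hV2, Matrix.one_mul]; simp only [Matrix.mul_assoc]
        _ = Vᴴ * V := by rw [hNNi, Matrix.one_mul]
        _ = 1 := hV1
    have hadj : M'.adjugate = M'.det • (Vᴴ * Ni * V) := by
      calc M'.adjugate = 1 * M'.adjugate := (Matrix.one_mul _).symm
        _ = ((Vᴴ * Ni * V) * M') * M'.adjugate := by rw [mul_eq_one_comm.mp hM'W]
        _ = (Vᴴ * Ni * V) * (M' * M'.adjugate) := by rw [Matrix.mul_assoc]
        _ = (Vᴴ * Ni * V) * (M'.det • 1) := by rw [Matrix.mul_adjugate]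
        _ = M'.det • (Vᴴ * Ni * V) := by rw [Matrix.mul_smul, Matrix.mul_one]
    have hsub : Matrix.diagonal (fun _ : Fin m => x) - B
        = (Matrix.diagonal (fun _ : Fin (m+1) => x) - Cm).submatrix Fin.succ Fin.succ := by
      ext i j
      by_cases h : i = j
      · subst h; simp [hB]
      · have h' : Fin.succ i ≠ Fin.succ j := fun hc => h (Fin.succ_inj.mp hc)
        simp [Matrix.diagonal_apply_ne _ h, Matrix.diagonal_apply_ne _ h', hB,
          Matrix.sub_apply]
    have hentry : (Vᴴ * Ni * V) 0 0 = ∑ i : Fin (m+1), (γ i.val : ℂ) * (x - z i.val)⁻¹ := by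
      rw [Matrix.mul_assoc, Matrix.mul_apply]
      refine Finset.sum_congr rfl fun i _ => ?_
      have h1 : (Ni * V) i 0 = (x - z i.val)⁻¹ * V i 0 := by
        rw [hNi, Matrix.diagonal_mul]
      rw [Matrix.conjTranspose_apply, h1, hVcol i]
      have h2 : star (u i) = u i := by
        rw [hu_def, Complex.star_def, Complex.conj_ofReal]
      have h3 : u i * u i = (γ i.val : ℂ) := by
        rw [hu_def, ← Complex.ofReal_mul, Real.mul_self_sqrt (hg i)]
      calc star (u i) * ((x - z i.val)⁻¹ * u i)
          = (u i * u i) * (x - z i.val)⁻¹ := by rw [h2]; ring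
        _ = (γ i.val : ℂ) * (x - z i.val)⁻¹ := by rw [h3]
    have hmain : (Matrix.diagonal (fun _ : Fin m => x) - B).det
        = N.det * ∑ i : Fin (m+1), (γ i.val : ℂ) * (x - z i.val)⁻¹ := by
      calc (Matrix.diagonal (fun _ : Fin m => x) - B).det
          = ((Matrix.diagonal (fun _ : Fin (m+1) => x) - Cm).submatrix Fin.succ Fin.succ).det := by
            rw [hsub]
        _ = (Matrix.diagonal (fun _ : Fin (m+1) => x) - Cm).adjugate 0 0 := (minor00 _).symm
        _ = M'.adjugate 0 0 := by rw [hM'eq]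
        _ = M'.det * ((Vᴴ * Ni * V) 0 0) := by rw [hadj, Matrix.smul_apply, smul_eq_mul]
        _ = N.det * ∑ i : Fin (m+1), (γ i.val : ℂ) * (x - z i.val)⁻¹ := by
            rw [hdetM', hentry]
    rw [hmain, hNdet]
    have hprodr : ∏ i : Fin (m+1), (x - z i.val) = ∏ l ∈ Finset.range (m+1), (x - z l) :=
      Fin.prod_univ_eq_prod_range (fun l => x - z l) (m+1)
    have hsumr : ∑ i : Fin (m+1), (γ i.val : ℂ) * (x - z i.val)⁻¹
        = ∑ j ∈ Finset.range (m+1), (γ j : ℂ) * (x - z j)⁻¹ :=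
      Fin.sum_univ_eq_sum_range (fun j => (γ j : ℂ) * (x - z j)⁻¹) (m+1)
    rw [hprodr, hsumr, Finset.mul_sum]
    refine Finset.sum_congr rfl fun j hj => ?_
    have hjne : x - z j ≠ 0 := by
      have := hx ⟨j, Finset.mem_range.mp hj⟩
      exact sub_ne_zero.mpr this
    have hpe := Finset.mul_prod_erase (Finset.range (m+1)) (fun l => x - z l) hj
    calc (∏ l ∈ Finset.range (m+1), (x - z l)) * ((γ j : ℂ) * (x - z j)⁻¹)
        = ((x - z j) * ∏ l ∈ (Finset.range (m+1)).erase j, (x - z l))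
            * ((γ j : ℂ) * (x - z j)⁻¹) := by rw [hpe]
      _ = ((x - z j) * (x - z j)⁻¹) * ((γ j : ℂ) * ∏ l ∈ (Finset.range (m+1)).erase j, (x - z l)) := by
            ring
      _ = (γ j : ℂ) * ∏ l ∈ (Finset.range (m+1)).erase j, (x - z l) := by
            rw [mul_inv_cancel₀ hjne, one_mul]
  -- charpoly identity
  have hrootsB : (Matrix.charmatrix B).det = ∏ j ∈ Finset.range m, (X - C (w j)) := by
    apply Polynomial.eq_of_infinite_eval_eq
    have hfin : Set.Finite (↑((Finset.range (m+1)).image z) : Set ℂ) := Finset.finite_toSet _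
    apply Set.Infinite.mono (s := (↑((Finset.range (m+1)).image z) : Set ℂ)ᶜ)
    · intro x hxc
      have hx : ∀ i : Fin (m+1), x ≠ z i.val := by
        intro i he
        apply hxc
        simp only [Finset.coe_image, Set.mem_image, Finset.mem_coe]
        exact ⟨i.val, Finset.mem_range.mpr i.isLt, he.symm⟩
      show Polynomial.eval x (Matrix.charmatrix B).det
          = Polynomial.eval x (∏ j ∈ Finset.range m, (X - C (w j)))
      rw [evalCharDet, hpoint x hx]
      have h2 := congrArg (Polynomial.eval x) hroots
      simp only [Polynomial.eval_finset_sum, Polynomial.eval_mul, Polynomial.eval_C,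
        Polynomial.eval_prod, Polynomial.eval_sub, Polynomial.eval_X] at h2
      rw [Polynomial.eval_prod]
      simp only [Polynomial.eval_sub, Polynomial.eval_X, Polynomial.eval_C]
      exact h2
    · exact hfin.infinite_compl
  obtain ⟨P, hP1, hP2⟩ := flag k m hkm' B w hrootsB
  -- embedding matrix
  obtain ⟨Em, hEm⟩ : ∃ Em : Matrix (Fin (m+1)) (Fin m) ℂ,
      Em = Matrix.of (fun i j => if i = Fin.succ j then (1:ℂ) else 0) := ⟨_, rfl⟩
  have hEE : Emᴴ * Em = 1 := by
    ext a b
    rw [Matrix.mul_apply]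
    rw [Finset.sum_eq_single (Fin.succ a)]
    · rw [hEm]
      simp [Matrix.conjTranspose_apply, Matrix.one_apply, Fin.succ_inj, eq_comm]
    · intro i _ hi
      rw [hEm]
      simp only [Matrix.conjTranspose_apply, Matrix.of_apply]
      rw [if_neg hi]
      simp
    · intro h; simp at h
  have hECE : ∀ Q : Matrix (Fin m) (Fin k) ℂ, Emᴴ * (Cm * (Em * Q)) = B * Q := by
    intro Q
    have h1 : Cm * Em = Matrix.of (fun i j => Cm i (Fin.succ j)) := by
      ext i j
      rw [Matrix.mul_apply, Finset.sum_eq_single (Fin.succ j)]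
      · rw [hEm]; simp
      · intro l _ hl; rw [hEm]; simp only [Matrix.of_apply]; rw [if_neg hl]; simp
      · intro h; simp at h
    have h2 : Emᴴ * (Cm * Em) = B := by
      rw [h1]
      ext a b
      rw [Matrix.mul_apply, Finset.sum_eq_single (Fin.succ a)]
      · rw [hEm, hB]; simp [Matrix.conjTranspose_apply]
      · intro i _ hi
        rw [hEm]
        simp only [Matrix.conjTranspose_apply, Matrix.of_apply]
        rw [if_neg hi]
        simp
      · intro h; simp at h
    calc Emᴴ * (Cm * (Em * Q)) = Emᴴ * (Cm * Em) * Q := by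
          rw [Matrix.mul_assoc, Matrix.mul_assoc]
      _ = B * Q := by rw [h2]
  obtain ⟨R, hR⟩ : ∃ R, R = V * (Em * P) := ⟨_, rfl⟩
  have hRR : Rᴴ * R = 1 := by
    rw [hR, Matrix.conjTranspose_mul, Matrix.conjTranspose_mul]
    calc (Pᴴ * Emᴴ) * Vᴴ * (V * (Em * P)) = Pᴴ * (Emᴴ * ((Vᴴ * V) * (Em * P))) := by
          simp only [Matrix.mul_assoc]
      _ = Pᴴ * (Emᴴ * (Em * P)) := by rw [hV1, Matrix.one_mul]
      _ = (Pᴴ * (Emᴴ * Em)) * P := by simp only [Matrix.mul_assoc]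
      _ = 1 := by rw [hEE, Matrix.mul_one, hP1]
  have hRZR : Rᴴ * (Matrix.diagonal (fun i : Fin (m+1) => z i.val) * R) = Pᴴ * B * P := by
    rw [hR, Matrix.conjTranspose_mul, Matrix.conjTranspose_mul, ← hZ]
    calc (Pᴴ * Emᴴ) * Vᴴ * (Z * (V * (Em * P)))
        = Pᴴ * (Emᴴ * ((Vᴴ * Z * V) * (Em * P))) := by simp only [Matrix.mul_assoc]
      _ = Pᴴ * (Emᴴ * (Cm * (Em * P))) := by rw [← hCm]
      _ = Pᴴ * (B * P) := by rw [hECE]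
      _ = Pᴴ * B * P := by rw [Matrix.mul_assoc]
  -- final estimate
  have habs : ∏ j ∈ Finset.range k, ‖w j‖
      = ‖(Rᴴ * (Matrix.diagonal (fun i : Fin (m+1) => z i.val) * R)).det‖ := by
    rw [hRZR, hP2, norm_prod]
  rw [habs]
  exact L2 _ R hRR _ (fun s hs => subset_prod (fun j => ‖z j‖)
    (fun i => norm_nonneg _) hzdesc s hs)
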